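/- Let V and V′ be finite-dimensional complex graded vector spaces with involutions ρ, ρ′ satisfying ρ(V_p) = V_{w−p}, ρ′(V′_q) = V′_{w′−q}, with all graded pieces of dimension at most 1. Suppose dim V is even and dim V′ is odd, with ε′ the scalar by which ρ′ acts on the middle piece of V′. Then d⁺(V ⊗ V′) = d⁻(V ⊗ V′) = dim V · dim V′ / 2 for the involution ρ ⊗ ρ′. -/

import Mathlib

open Module LinearMap TensorProduct


lemma invol_eigen {W : Type*} [AddCommGroup W] [Module ℂ W] [FiniteDimensional ℂ W]
    (σ : W →ₗ[ℂ] W) (hσ : σ ∘ₗ σ = LinearMap.id) :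
    finrank ℂ (ker (σ - LinearMap.id)) + finrank ℂ (ker (σ + LinearMap.id)) = finrank ℂ W ∧
    trace ℂ W σ = (finrank ℂ (ker (σ - LinearMap.id)) : ℂ)
      - (finrank ℂ (ker (σ + LinearMap.id)) : ℂ) := by
  have hσ2 : ∀ x, σ (σ x) = x := fun x => by
    have := DFunLike.congr_fun hσ x; simpa using this
  set P := ker (σ - LinearMap.id) with hP
  set Q := ker (σ + LinearMap.id) with hQ
  have hmemP : ∀ x, x ∈ P ↔ σ x = x := by
    intro x; simp [hP, LinearMap.mem_ker, sub_eq_zero]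
  have hmemQ : ∀ x, x ∈ Q ↔ σ x = -x := by
    intro x
    simp only [hQ, LinearMap.mem_ker, LinearMap.add_apply, LinearMap.id_apply]
    constructor
    · intro h; linear_combination (norm := module) h
    · intro h; rw [h]; abel
  have hcompl : IsCompl P Q := by
    constructor
    · rw [disjoint_iff_inf_le]
      intro x hx
      have h1 := (hmemP x).mp hx.1
      have h2 := (hmemQ x).mp hx.2
      have : (2 : ℂ) • x = 0 := by
        have := h1.symm.trans h2
        linear_combination (norm := module) this
      simpa using smul_eq_zero.mp this
    · rw [codisjoint_iff_le_sup]
      intro x _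
      have hx1 : ((2:ℂ)⁻¹) • (x + σ x) ∈ P := by
        rw [hmemP]
        rw [map_smul, map_add, hσ2]
        module
      have hx2 : ((2:ℂ)⁻¹) • (x - σ x) ∈ Q := by
        rw [hmemQ]
        rw [map_smul, map_sub, hσ2]
        module
      have : x = ((2:ℂ)⁻¹) • (x + σ x) + ((2:ℂ)⁻¹) • (x - σ x) := by
        have h2 : (2:ℂ) ≠ 0 := two_ne_zero
        field_simp
        module
      rw [this]
      exact Submodule.add_mem_sup hx1 hx2
  refine ⟨?_, ?_⟩
  · rw [add_comm]
    rw [← Submodule.finrank_add_eq_of_isCompl hcompl]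
    ring
  · set N : Bool → Submodule ℂ W := fun b => if b then P else Q with hN
    have hInt : DirectSum.IsInternal N := by
      rw [DirectSum.isInternal_submodule_iff_isCompl N (i := true) (j := false) (by simp)
        (by ext k; cases k <;> simp)]
      simpa [hN] using hcompl
    have hmapsTo : ∀ b, Set.MapsTo σ (N b) (N b) := by
      intro b x hx
      cases b
      · replace hx : x ∈ Q := hx
        show σ x ∈ Q
        rw [hmemQ] at hx ⊢
        rw [hσ2, hx, neg_neg]
      · replace hx : x ∈ P := hx
        show σ x ∈ P
        rw [hmemP, hσ2]
        exact ((hmemP x).mp hx).symm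
    rw [LinearMap.trace_eq_sum_trace_restrict hInt hmapsTo]
    have h1 : σ.restrict (hmapsTo true) = LinearMap.id := by
      ext x
      have hx : (x : W) ∈ P := x.2
      show σ (x : W) = (x : W)
      simpa using (hmemP x).mp hx
    have h2 : σ.restrict (hmapsTo false) = -LinearMap.id := by
      ext x
      have hx : (x : W) ∈ Q := x.2
      show σ (x : W) = -(x : W)
      simpa using (hmemQ x).mp hx
    rw [Fintype.sum_bool, h1, h2, LinearMap.trace_id, map_neg, LinearMap.trace_id]
    show (finrank ℂ P : ℂ) + -(finrank ℂ Q : ℂ) = _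
    ring

lemma graded_trace_zero {V : Type*} [AddCommGroup V] [Module ℂ V] [FiniteDimensional ℂ V]
    (Vp : ℤ → Submodule ℂ V) (hV : DirectSum.IsInternal Vp)
    (hVsmall : ∀ p, finrank ℂ (Vp p) ≤ 1)
    (ρ : V →ₗ[ℂ] V) (hρ : ρ ∘ₗ ρ = LinearMap.id)
    (w : ℤ) (hmap : ∀ p, (Vp p).map ρ = Vp (w - p))
    (heven : Even (finrank ℂ V)) :
    trace ℂ V ρ = 0 := by
  classical
  have hρ2 : ∀ x, ρ (ρ x) = x := fun x => by
    have := DFunLike.congr_fun hρ x; simpa using this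
  set v : ∀ p : ℤ, Basis (Fin (finrank ℂ (Vp p))) ℂ (Vp p) :=
    fun p => finBasis ℂ (Vp p) with hv
  set b := hV.collectedBasis v with hb
  haveI : Fintype ((p : ℤ) × Fin (finrank ℂ (Vp p))) :=
    FiniteDimensional.fintypeBasisIndex b
  have hmem : ∀ i : (p : ℤ) × Fin (finrank ℂ (Vp p)), ρ (b i) ∈ Vp (w - i.1) := by
    intro i
    rw [← hmap i.1]
    exact Submodule.mem_map_of_mem (hV.collectedBasis_mem v i)
  have htr : trace ℂ V ρ = ∑ i, b.repr (ρ (b i)) i := by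
    rw [LinearMap.trace_eq_matrix_trace ℂ b ρ, Matrix.trace]
    congr 1
    ext i
    rw [Matrix.diag_apply, LinearMap.toMatrix_apply]
  have hdiag0 : ∀ p (a : Fin (finrank ℂ (Vp p))), w - p ≠ p →
      b.repr (ρ (b ⟨p, a⟩)) ⟨p, a⟩ = 0 := by
    intro p a hne
    exact hV.collectedBasis_repr_of_mem_ne v hne (hmem ⟨p, a⟩)
  by_cases hex : ∃ p, w - p = p ∧ 0 < finrank ℂ (Vp p)
  · obtain ⟨p₀, hp₀, hpos⟩ := hex
    have h1 : finrank ℂ (Vp p₀) = 1 := le_antisymm (hVsmall p₀) hpos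
    set i₀ : (p : ℤ) × Fin (finrank ℂ (Vp p)) := ⟨p₀, ⟨0, hpos⟩⟩ with hi₀
    set c := b.repr (ρ (b i₀)) i₀ with hc
    have hother : ∀ i : (p : ℤ) × Fin (finrank ℂ (Vp p)), i ≠ i₀ →
        b.repr (ρ (b i₀)) i = 0 := by
      intro i hne
      obtain ⟨p, a⟩ := i
      rcases eq_or_ne p p₀ with hpp | hpp
      · subst hpp
        exfalso
        exact hne (by
          have : a = ⟨0, hpos⟩ := Fin.ext (by have := a.isLt; omega)
          rw [this])
      · have : ρ (b i₀) ∈ Vp (w - p₀) := hmem i₀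
        rw [hp₀] at this
        exact hV.collectedBasis_repr_of_mem_ne v (fun h => hpp h.symm) this
    have hsum : trace ℂ V ρ = c := by
      rw [htr]
      refine Finset.sum_eq_single_of_mem i₀ (Finset.mem_univ _) ?_
      intro i _ hne
      obtain ⟨p, a⟩ := i
      rcases eq_or_ne p p₀ with hpp | hpp
      · subst hpp
        exact absurd (by
          have : a = ⟨0, hpos⟩ := Fin.ext (by have := a.isLt; omega)
          rw [this]) hne
      · exact hdiag0 p a (by omega)
    have hrx : ρ (b i₀) = c • b i₀ := by
      apply b.repr.injective
      rw [map_smul, b.repr_self]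
      ext j
      rcases eq_or_ne j i₀ with hj | hj
      · subst hj
        simp [← hc]
      · rw [hother j hj]
        simp [Finsupp.single_apply, Ne.symm hj]
    have hc2 : c * c = 1 := by
      have hx : b i₀ = (c * c) • b i₀ := by
        conv_lhs => rw [← hρ2 (b i₀), hrx, map_smul, hrx, smul_smul]
      have hne := b.ne_zero i₀
      by_contra hcc
      have : ((c * c) - 1) • b i₀ = 0 := by
        rw [sub_smul, one_smul, ← hx, sub_self]
      rcases smul_eq_zero.mp this with h | h
      · exact hcc (by linear_combination h)
      · exact hne h
    obtain ⟨hdim, htrace⟩ := invol_eigen ρ hρ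
    set A := finrank ℂ (ker (ρ - LinearMap.id)) with hA
    set B := finrank ℂ (ker (ρ + LinearMap.id)) with hB
    exfalso
    rcases mul_self_eq_one_iff.mp hc2 with h1c | h1c
    · have hab : (A : ℂ) = ((B + 1 : ℕ) : ℂ) := by
        push_cast
        rw [hsum, h1c] at htrace
        linear_combination -htrace
      have : A = B + 1 := Nat.cast_injective hab
      obtain ⟨k, hk⟩ := heven
      omega
    · have hab : (B : ℂ) = ((A + 1 : ℕ) : ℂ) := by
        push_cast
        rw [hsum, h1c] at htrace
        linear_combination htrace
      have : B = A + 1 := Nat.cast_injective hab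
      obtain ⟨k, hk⟩ := heven
      omega
  · rw [htr]
    refine Finset.sum_eq_zero ?_
    intro i _
    obtain ⟨p, a⟩ := i
    refine hdiag0 p a ?_
    intro h
    exact hex ⟨p, h, a.pos⟩

/-- V of even dimension and V′ of odd dimension, both ℤ-graded with all graded
pieces of dimension ≤ 1, with involutions ρ, ρ′ satisfying ρ(V_p) = V_{w−p} and
ρ′(V′_q) = V′_{w′−q}, and ρ′ acting by a sign ε′ on the middle piece of V′.
Then for ρ ⊗ ρ′ on V ⊗ V′ one has
d⁺(V ⊗ V′) = d⁻(V ⊗ V′) = dim V · dim V′ / 2. -/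
theorem tensor_even_odd_eigenspace_dims
    (V V' : Type*) [AddCommGroup V] [Module ℂ V] [FiniteDimensional ℂ V]
    [AddCommGroup V'] [Module ℂ V'] [FiniteDimensional ℂ V']
    (Vp : ℤ → Submodule ℂ V) (hV : DirectSum.IsInternal Vp)
    (hVsmall : ∀ p, finrank ℂ (Vp p) ≤ 1)
    (V'q : ℤ → Submodule ℂ V') (hV' : DirectSum.IsInternal V'q)
    (hV'small : ∀ q, finrank ℂ (V'q q) ≤ 1)
    (ρ : V →ₗ[ℂ] V) (hρ : ρ ∘ₗ ρ = LinearMap.id)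
    (ρ' : V' →ₗ[ℂ] V') (hρ' : ρ' ∘ₗ ρ' = LinearMap.id)
    (w w' : ℤ) (hmap : ∀ p, (Vp p).map ρ = Vp (w - p))
    (hmap' : ∀ q, (V'q q).map ρ' = V'q (w' - q))
    (heven : Even (finrank ℂ V)) (hodd : Odd (finrank ℂ V'))
    (hw' : Even w')
    (ε' : ℤ) (hε' : ε' = 1 ∨ ε' = -1)
    (hmid' : ∀ v ∈ V'q (w' / 2), ρ' v = (ε' : ℂ) • v) :
    finrank ℂ (LinearMap.ker (TensorProduct.map ρ ρ' - LinearMap.id)) =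
        finrank ℂ V * finrank ℂ V' / 2 ∧
    finrank ℂ (LinearMap.ker (TensorProduct.map ρ ρ' + LinearMap.id)) =
        finrank ℂ V * finrank ℂ V' / 2 := by
  have hσ : (TensorProduct.map ρ ρ') ∘ₗ (TensorProduct.map ρ ρ') = LinearMap.id := by
    rw [← TensorProduct.map_comp, hρ, hρ']
    exact TensorProduct.map_id
  obtain ⟨hdim, htrace⟩ := invol_eigen (TensorProduct.map ρ ρ') hσ
  have htr0 : trace ℂ (V ⊗[ℂ] V') (TensorProduct.map ρ ρ') = 0 := by
    rw [LinearMap.trace_tensorProduct' ρ ρ',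
      graded_trace_zero Vp hV hVsmall ρ hρ w hmap heven, zero_mul]
  rw [htr0] at htrace
  set A := finrank ℂ (LinearMap.ker (TensorProduct.map ρ ρ' - LinearMap.id)) with hA
  set B := finrank ℂ (LinearMap.ker (TensorProduct.map ρ ρ' + LinearMap.id)) with hB
  have hAB : A = B := by
    have : (A : ℂ) = (B : ℂ) := by linear_combination -htrace
    exact Nat.cast_injective this
  have hfr : finrank ℂ (V ⊗[ℂ] V') = finrank ℂ V * finrank ℂ V' :=
    Module.finrank_tensorProduct
  rw [hfr] at hdim
  constructor <;> omega
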